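/- Fix d₁, d₂, d₃ ∈ ℝ, set d_ij := d_i − d_j, and let I ⊆ ℝ ∖ {0,1} be an interval. If F₁₂, F₂₁, F₁₃, F₃₁, F₂₃, F₃₂ : I → ℝ are differentiable and satisfy the system F₁₂' = F₁₃F₃₂/(z(z−1)); F₁₃' = −F₁₂F₂₃/(z−1) + d₁₃F₁₃/z; F₂₁' = F₂₃F₃₁/(z(z−1)); F₂₃' = F₂₁F₁₃/z + d₂₃F₂₃/(z−1); F₃₁' = −F₃₂F₂₁/(z−1) − d₁₃F₃₁/z; F₃₂' = F₃₁F₁₂/z − d₂₃F₃₂/(z−1), then the function F₂₃F₃₁F₁₂ − F₁₃F₃₂F₂₁ + d₂₃ F₁₃F₃₁ + d₁₃ F₂₃F₃₂ has zero derivative on I, hence is constant. -/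

import Mathlib

theorem first_integral_cubic (d1 d2 d3 : ℝ) (I : Set ℝ)
    (hI : ∀ z ∈ I, z ≠ 0 ∧ z ≠ 1) (hconv : Convex ℝ I)
    (F12 F21 F13 F31 F23 F32 : ℝ → ℝ)
    (h12 : ∀ z ∈ I, HasDerivAt F12 (F13 z * F32 z / (z * (z - 1))) z)
    (h13 : ∀ z ∈ I, HasDerivAt F13 (-(F12 z * F23 z) / (z - 1) + (d1 - d3) * F13 z / z) z)
    (h21 : ∀ z ∈ I, HasDerivAt F21 (F23 z * F31 z / (z * (z - 1))) z)
    (h23 : ∀ z ∈ I, HasDerivAt F23 (F21 z * F13 z / z + (d2 - d3) * F23 z / (z - 1)) z)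
    (h31 : ∀ z ∈ I, HasDerivAt F31 (-(F32 z * F21 z) / (z - 1) - (d1 - d3) * F31 z / z) z)
    (h32 : ∀ z ∈ I, HasDerivAt F32 (F31 z * F12 z / z - (d2 - d3) * F32 z / (z - 1)) z) :
    (∀ z ∈ I, HasDerivAt
      (fun t => F23 t * F31 t * F12 t - F13 t * F32 t * F21 t
        + (d2 - d3) * (F13 t * F31 t) + (d1 - d3) * (F23 t * F32 t)) 0 z) ∧
    (∀ z ∈ I, ∀ w ∈ I,
      F23 z * F31 z * F12 z - F13 z * F32 z * F21 z
          + (d2 - d3) * (F13 z * F31 z) + (d1 - d3) * (F23 z * F32 z)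
        = F23 w * F31 w * F12 w - F13 w * F32 w * F21 w
          + (d2 - d3) * (F13 w * F31 w) + (d1 - d3) * (F23 w * F32 w)) := by
  have key : ∀ z ∈ I, HasDerivAt
      (fun t => F23 t * F31 t * F12 t - F13 t * F32 t * F21 t
        + (d2 - d3) * (F13 t * F31 t) + (d1 - d3) * (F23 t * F32 t)) 0 z := by
    intro z hz
    obtain ⟨hz0, hz1⟩ := hI z hz
    have hz1' : z - 1 ≠ 0 := sub_ne_zero.mpr hz1
    have h := ((((h23 z hz).mul (h31 z hz)).mul (h12 z hz)).sub
        (((h13 z hz).mul (h32 z hz)).mul (h21 z hz))).add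
        (((h13 z hz).mul (h31 z hz)).const_mul (d2 - d3)) |>.add
        (((h23 z hz).mul (h32 z hz)).const_mul (d1 - d3))
    refine h.congr_deriv ?_
    simp only [Pi.mul_apply]
    field_simp
    ring
  refine ⟨key, fun z hz w hw => ?_⟩
  have h0 := hconv.norm_image_sub_le_of_norm_hasFDerivWithin_le (C := 0)
    (fun x hx => ((key x hx).hasDerivWithinAt).hasFDerivWithinAt)
    (fun x hx => by simp) hw hz
  rw [zero_mul] at h0
  exact sub_eq_zero.mp (norm_le_zero_iff.mp h0)
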